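/- Let R be a commutative Noetherian local ring, let a1, a2 be a regular sequence in R, and let p ≥ 2. Set x1 = a1^p, x2 = a2^p, y = a1*a2^(p-1), and I = (x1, x2, y), J = (x1, x2). Then I^p = J * I^(p-1), i.e., J is a reduction of I with reduction number at most p-1. -/

import Mathlib

/-- For a Noetherian local ring `R` and a regular sequence `a1, a2`,
with `x1 = a1^p`, `x2 = a2^p`, `y = a1*a2^(p-1)`, `I = (x1,x2,y)`, `J = (x1,x2)`,
one has `I^p = J * I^(p-1)`. -/
theorem stmt_0 {R : Type*} [CommRing R] [IsNoetherianRing R] [IsLocalRing R]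
    (a1 a2 : R) (hreg1 : a1 ∈ nonZeroDivisors R)
    (hreg2 : ∀ r : R, a2 * r ∈ Ideal.span {a1} → r ∈ Ideal.span {a1})
    (p : ℕ) (hp : 2 ≤ p)
    (I J : Ideal R)
    (hI : I = Ideal.span {a1 ^ p, a2 ^ p, a1 * a2 ^ (p - 1)})
    (hJ : J = Ideal.span {a1 ^ p, a2 ^ p}) :
    I ^ p = J * I ^ (p - 1) := by
  set x1 := a1 ^ p with hx1
  set x2 := a2 ^ p with hx2
  set y := a1 * a2 ^ (p - 1) with hy
  set Y := Ideal.span {y} with hY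
  have hIJ : I = J + Y := by
    rw [hI, hJ, hY]
    rw [show ({x1, x2, y} : Set R) = insert x1 (insert x2 {y}) from rfl,
      Ideal.span_insert, Ideal.span_insert, Ideal.span_insert]
    rw [Submodule.add_eq_sup, sup_assoc]
  have hJI : J ≤ I := by rw [hIJ, Submodule.add_eq_sup]; exact le_sup_left
  have hYI : Y ≤ I := by rw [hIJ, Submodule.add_eq_sup]; exact le_sup_right
  have hx2I : x2 ∈ I := hI ▸ Ideal.subset_span (by simp)
  have hx1J : x1 ∈ J := hJ ▸ Ideal.subset_span (by simp)
  have hyp : y ^ p = x1 * x2 ^ (p - 1) := by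
    rw [hy, hx1, hx2, mul_pow, ← pow_mul, ← pow_mul]
    ring_nf
  apply le_antisymm
  · conv_lhs => rw [hIJ]
    rw [add_pow]
    refine Finset.sum_induction _ (· ≤ J * I ^ (p - 1))
      (fun a b ha hb => by rw [Submodule.add_eq_sup]; exact sup_le ha hb)
      zero_le (fun k hk => ?_)
    refine le_trans Ideal.mul_le_left ?_
    rcases Nat.eq_zero_or_pos k with rfl | hk1
    · simp only [pow_zero, Nat.sub_zero, one_mul]
      rw [Ideal.span_singleton_pow, hyp]
      exact (Ideal.span_singleton_le_iff_mem _).mpr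
        (Ideal.mul_mem_mul hx1J (Ideal.pow_mem_pow hx2I _))
    · have hkp : k ≤ p := by have := Finset.mem_range.mp hk; omega
      have : J ^ k * Y ^ (p - k) = J * (J ^ (k - 1) * Y ^ (p - k)) := by
        rw [← mul_assoc, ← pow_succ', Nat.sub_add_cancel hk1]
      rw [this]
      refine Ideal.mul_mono le_rfl ?_
      calc J ^ (k - 1) * Y ^ (p - k) ≤ I ^ (k - 1) * I ^ (p - k) :=
            Ideal.mul_mono (pow_le_pow_left' hJI _) (pow_le_pow_left' hYI _)
        _ = I ^ (p - 1) := by rw [← pow_add]; congr 1; omega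
  · have : J * I ^ (p - 1) ≤ I * I ^ (p - 1) := Ideal.mul_mono hJI le_rfl
    rwa [← pow_succ', show p - 1 + 1 = p by omega] at this
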